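/- (Weak-norm Cauchy sequences of polynomials converge uniformly.) Let n ≥ 1, d ∈ ℕ, let U ⊆ ℝⁿ be a nonempty bounded open set, and for a polynomial function P on ℝⁿ define ‖P‖_⋆ := sup { ∫_U P(x) φ(x) dx : φ ∈ C²(ℝⁿ), φ has compact support contained in U, and ‖φ‖_{C²(ℝⁿ)} ≤ 1 }. Let (P⁽ʲ⁾)_{j∈ℕ} be a sequence of polynomial functions of total degree at most d−1 which is a Cauchy sequence with respect to ‖·‖_⋆, i.e. for every η > 0 there is N with ‖P⁽ʲ⁾ − P⁽ʲ'⁾‖_⋆ ≤ η for all j, j' ≥ N. Then there exists a polynomial function P of total degree at most d−1 such that sup_{x ∈ U} |P⁽ʲ⁾(x) − P(x)| → 0 as j → ∞. -/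

import Mathlib

open MeasureTheory Metric Set Filter
open scoped ENNReal

noncomputable section

/-- Euclidean space `ℝⁿ`. -/
abbrev En (n : ℕ) := EuclideanSpace ℝ (Fin n)

/-- The principal value fractional Laplacian `(-Δ)ˢ v` exists at `x` and equals `L`:
all the truncated integrals are defined and they converge to `L` as the truncation
parameter tends to `0⁺`. -/
def PVFracLapAt (n : ℕ) (s : ℝ) (v : En n → ℝ) (x : En n) (L : ℝ) : Prop :=
  (∀ ε : ℝ, 0 < ε →
    IntegrableOn (fun y => (v x - v y) / ‖x - y‖ ^ ((n : ℝ) + 2 * s)) {y | ε < ‖x - y‖}) ∧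
  Tendsto (fun ε : ℝ =>
      ∫ y in {y : En n | ε < ‖x - y‖}, (v x - v y) / ‖x - y‖ ^ ((n : ℝ) + 2 * s))
    (nhdsWithin 0 (Ioi 0)) (nhds L)

/-- `P : ℝⁿ → ℝ` is a polynomial function of total degree at most `k - 1`
(with the convention that for `k = 0` it is identically zero). -/
def IsPolyDegLt (n k : ℕ) (P : En n → ℝ) : Prop :=
  ∃ p : MvPolynomial (Fin n) ℝ,
    (∀ m ∈ p.support, (m.sum fun _ e => e) < k) ∧
    ∀ x : En n, P x = MvPolynomial.eval (fun i => x i) p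

/-- `(-Δ)ˢ u ≐ᵏ f` pointwise in the unit ball `B₁`. -/
def FracLapEqModPoly (n : ℕ) (s : ℝ) (k : ℕ) (u f : En n → ℝ) : Prop :=
  ∃ F P : ℝ → En n → ℝ,
    (∀ R : ℝ, 1 ≤ R →
      ContinuousOn (F R) (ball (0 : En n) 1) ∧ IsPolyDegLt n k (P R) ∧
      ∀ x ∈ ball (0 : En n) 1,
        PVFracLapAt n s ((ball (0 : En n) R).indicator u) x (F R x + P R x)) ∧
    ∀ x ∈ ball (0 : En n) 1, Tendsto (fun R => F R x) atTop (nhds (f x))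

/-- The tail quantity `J_{u,j} = ∫_{B_{1/2}ᶜ} |u(y)| / |y|^{n+2s+j} dy`, valued in `[0,∞]`. -/
def Jtail (n : ℕ) (s : ℝ) (j : ℕ) (u : En n → ℝ) : ℝ≥0∞ :=
  ∫⁻ y in (ball (0 : En n) (1 / 2))ᶜ,
    ENNReal.ofReal (|u y| / ‖y‖ ^ ((n : ℝ) + 2 * s + (j : ℝ)))

/-- The Hölder seminorm `[f]_{C^γ(Ω)}`, valued in `[0,∞]`. -/
def holderSemi (n : ℕ) (γ : ℝ) (Ω : Set (En n)) (f : En n → ℝ) : ℝ≥0∞ :=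
  ⨆ (x ∈ Ω) (y ∈ Ω) (_ : x ≠ y),
    ENNReal.ofReal
      (‖iteratedFDerivWithin ℝ ⌊γ⌋₊ f Ω x - iteratedFDerivWithin ℝ ⌊γ⌋₊ f Ω y‖ /
        ‖x - y‖ ^ (γ - (⌊γ⌋₊ : ℝ)))

/-- The norm `‖f‖_{C^m(Ω)}`, valued in `[0,∞]`. -/
def cNorm (n : ℕ) (m : ℕ) (Ω : Set (En n)) (f : En n → ℝ) : ℝ≥0∞ :=
  ∑ j ∈ Finset.range (m + 1),
    ⨆ x ∈ Ω, ENNReal.ofReal ‖iteratedFDerivWithin ℝ j f Ω x‖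

/-- The norm `‖f‖_{C^γ(Ω)} = ‖f‖_{C^{⌊γ⌋}(Ω)} + [f]_{C^γ(Ω)}`, valued in `[0,∞]`. -/
def cHolderNorm (n : ℕ) (γ : ℝ) (Ω : Set (En n)) (f : En n → ℝ) : ℝ≥0∞ :=
  cNorm n ⌊γ⌋₊ Ω f + holderSemi n γ Ω f

/-- The seminorm `[f]_{C^γ(Ω;k)}`: the infimum of `[f - P]_{C^γ(Ω)}` over all
polynomials `P` of degree at most `k - 1`. -/
def holderSemiMod (n : ℕ) (γ : ℝ) (Ω : Set (En n)) (k : ℕ) (f : En n → ℝ) : ℝ≥0∞ :=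
  ⨅ (P : En n → ℝ) (_ : IsPolyDegLt n k P), holderSemi n γ Ω (fun x => f x - P x)

/-- Weak-norm Cauchy sequences of polynomials converge uniformly.
The Cauchy condition `‖P⁽ʲ⁾ − P⁽ʲ'⁾‖_⋆ ≤ η` is stated in its unfolded form: the
integral against every admissible test function `φ` (of class `C²`, compactly
supported in `U`, with `‖φ‖_{C²(ℝⁿ)} ≤ 1`) is at most `η`. -/
lemma poly_analytic {n : ℕ} (p : MvPolynomial (Fin n) ℝ) :
    AnalyticOnNhd ℝ (fun x : En n => MvPolynomial.eval (fun i => x i) p) Set.univ := by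
  induction p using MvPolynomial.induction_on with
  | C a => simpa [MvPolynomial.eval_C] using (analyticOnNhd_const :
      AnalyticOnNhd ℝ (fun _ : En n => a) Set.univ)
  | add p q hp hq => simpa [map_add, Pi.add_def] using hp.add hq
  | mul_X p i hp =>
      have hx : AnalyticOnNhd ℝ (fun x : En n => x i) Set.univ := by
        have := (EuclideanSpace.proj i : En n →L[ℝ] ℝ).analyticOnNhd Set.univ
        simpa using this
      simpa [map_mul, MvPolynomial.eval_X] using hp.mul hx

lemma poly_cont {n d : ℕ} {f : En n → ℝ} (hf : IsPolyDegLt n d f) : Continuous f := by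
  obtain ⟨p, -, hfe⟩ := hf
  have h : f = fun x : En n => MvPolynomial.eval (fun i => x i) p := funext hfe
  rw [h]
  exact continuousOn_univ.mp (poly_analytic p).continuousOn

def Vmod (n d : ℕ) : Submodule ℝ (En n → ℝ) where
  carrier := {f | IsPolyDegLt n d f}
  zero_mem' := ⟨0, by simp, by simp⟩
  add_mem' := by
    rintro f g ⟨p, hp, hpe⟩ ⟨q, hq, hqe⟩
    refine ⟨p + q, fun m hm => ?_, fun x => by simp [hpe x, hqe x]⟩
    rcases Finset.mem_union.mp (MvPolynomial.support_add hm) with h | h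
    · exact hp m h
    · exact hq m h
  smul_mem' := by
    rintro c f ⟨p, hp, hpe⟩
    refine ⟨c • p, fun m hm => hp m (Finsupp.support_smul hm), fun x => ?_⟩
    simp [hpe x, MvPolynomial.smul_eq_C_mul]

lemma Vmod_fd (n d : ℕ) : FiniteDimensional ℝ (Vmod n d) := by
  classical
  set S : Set (En n → ℝ) :=
    Set.range (fun m : Fin n → Fin d => fun x : En n => ∏ i, x i ^ (m i : ℕ)) with hS
  haveI : FiniteDimensional ℝ (Submodule.span ℝ S) :=
    FiniteDimensional.span_of_finite ℝ (Set.finite_range _)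
  refine Submodule.finiteDimensional_of_le (S₂ := Submodule.span ℝ S) ?_
  rintro f ⟨p, hdeg, hfe⟩
  have hf : f = ∑ m ∈ p.support,
      MvPolynomial.coeff m p • (fun x : En n => ∏ i, x i ^ m i) := by
    funext x
    rw [hfe x, MvPolynomial.eval_eq']
    simp [Finset.sum_apply]
  rw [hf]
  refine Submodule.sum_mem _ fun m hm => Submodule.smul_mem _ _ (Submodule.subset_span ?_)
  have hlt : ∀ i, m i < d := by
    intro i
    have hsum := hdeg m hm
    have hle : m i ≤ m.sum fun _ e => e := by
      by_cases hi : i ∈ m.support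
      · exact Finset.single_le_sum (fun _ _ => Nat.zero_le _) hi
      · simp [Finsupp.notMem_support_iff.mp hi]
    omega
  exact ⟨fun i => ⟨m i, hlt i⟩, by funext x; simp⟩

lemma integ_mul {n : ℕ} {U : Set (En n)} (hUbdd : Bornology.IsBounded U)
    {f φ : En n → ℝ} (hf : Continuous f) (hφ : Continuous φ) :
    IntegrableOn (fun x => f x * φ x) U := by
  have h1 : IntegrableOn (fun x => f x * φ x) (closure U) :=
    ContinuousOn.integrableOn_compact hUbdd.isCompact_closure ((hf.mul hφ).continuousOn)
  exact h1.mono_set subset_closure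

lemma exists_test {n : ℕ} {U : Set (En n)} (hUopen : IsOpen U)
    (hUbdd : Bornology.IsBounded U)
    {f : En n → ℝ} (hf : Continuous f)
    {x0 : En n} (hx0 : x0 ∈ U) (hfx0 : 0 < f x0) :
    ∃ φ : En n → ℝ, ContDiff ℝ 2 φ ∧ HasCompactSupport φ ∧ tsupport φ ⊆ U ∧
      (⨆ x, |φ x|) + (⨆ x, ‖fderiv ℝ φ x‖) + (⨆ x, ‖iteratedFDeriv ℝ 2 φ x‖) ≤ 1 ∧
      0 < ∫ x in U, f x * φ x := by
  classical
  set W : Set (En n) := U ∩ f ⁻¹' (Ioi 0) with hW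
  have hWopen : IsOpen W := hUopen.inter (isOpen_Ioi.preimage hf)
  have hx0W : x0 ∈ W := ⟨hx0, hfx0⟩
  obtain ⟨r, hr, hball⟩ := (Metric.nhds_basis_closedBall.mem_iff).mp (hWopen.mem_nhds hx0W)
  set b : ContDiffBump x0 := ⟨r/2, r, half_pos hr, half_lt_self hr⟩ with hb
  set ψ : En n → ℝ := ⇑b with hψdef
  have hψ2 : ContDiff ℝ 2 ψ := b.contDiff (n := 2)
  have hψc : HasCompactSupport ψ := b.hasCompactSupport
  have hψts : tsupport ψ ⊆ U := by
    rw [hψdef, b.tsupport_eq]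
    exact fun y hy => (hball hy).1
  have hsupp : Function.support ψ = ball x0 r := by rw [hψdef, b.support_eq]
  have hψ0 : ∀ x, 0 ≤ ψ x := fun x => b.nonneg
  -- nonneg on U
  have hnn : ∀ x ∈ U, 0 ≤ f x * ψ x := by
    intro x hx
    by_cases hxs : ψ x = 0
    · simp [hxs]
    · have hxb : x ∈ ball x0 r := by rw [← hsupp]; exact hxs
      have hfp : 0 < f x := (hball (ball_subset_closedBall hxb)).2
      exact le_of_lt (mul_pos hfp (lt_of_le_of_ne (hψ0 x) (Ne.symm hxs)))
  have hint : IntegrableOn (fun x => f x * ψ x) U := integ_mul hUbdd hf b.continuous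
  have hpos : 0 < ∫ x in U, f x * ψ x := by
    rw [setIntegral_pos_iff_support_of_nonneg_ae
      ((ae_restrict_iff' hUopen.measurableSet).mpr (Eventually.of_forall hnn)) hint]
    refine lt_of_lt_of_le (measure_ball_pos volume x0 (half_pos hr)) (measure_mono ?_)
    intro y hy
    have hyr : y ∈ ball x0 r := ball_subset_ball (by linarith) hy
    have hyW : y ∈ W := hball (ball_subset_closedBall hyr)
    refine ⟨?_, hyW.1⟩
    have hψy : 0 < ψ y := b.pos_of_mem_ball hyr
    exact (mul_pos hyW.2 hψy).ne'
  -- sups of ψ and its derivatives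
  have hbd1 : BddAbove (Set.range fun x => |ψ x|) := by
    simpa [Real.norm_eq_abs] using
      (b.continuous.norm).bddAbove_range_of_hasCompactSupport hψc.norm
  have hbd2 : BddAbove (Set.range fun x => ‖fderiv ℝ ψ x‖) :=
    ((hψ2.continuous_fderiv (by norm_num)).norm).bddAbove_range_of_hasCompactSupport
      (hψc.fderiv ℝ).norm
  have hbd3 : BddAbove (Set.range fun x => ‖iteratedFDeriv ℝ 2 ψ x‖) :=
    ((hψ2.continuous_iteratedFDeriv (le_refl 2)).norm).bddAbove_range_of_hasCompactSupport
      (hψc.iteratedFDeriv 2).norm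
  set S1 := ⨆ x, |ψ x| with hS1
  set S2 := ⨆ x, ‖fderiv ℝ ψ x‖ with hS2
  set S3 := ⨆ x, ‖iteratedFDeriv ℝ 2 ψ x‖ with hS3
  have hS1nn : 0 ≤ S1 := le_trans (abs_nonneg _) (le_ciSup hbd1 x0)
  have hS2nn : 0 ≤ S2 := le_trans (norm_nonneg _) (le_ciSup hbd2 x0)
  have hS3nn : 0 ≤ S3 := le_trans (norm_nonneg _) (le_ciSup hbd3 x0)
  set D := 1 + S1 + S2 + S3 with hD
  have hDpos : 0 < D := by positivity
  set c := D⁻¹ with hc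
  have hcpos : 0 < c := inv_pos.mpr hDpos
  refine ⟨fun x => c * ψ x, hψ2.const_smul c, ?_, ?_, ?_, ?_⟩
  · exact hψc.mul_left
  · refine subset_trans (closure_mono ?_) hψts
    intro x hx
    simp only [Function.mem_support] at hx ⊢
    intro h0
    exact hx (by rw [h0, mul_zero])
  · -- norm bound
    have hd : Differentiable ℝ ψ := hψ2.differentiable (by norm_num)
    have e1 : (⨆ x, |c * ψ x|) ≤ c * S1 := by
      refine ciSup_le fun x => ?_
      rw [abs_mul, abs_of_pos hcpos]
      exact mul_le_mul_of_nonneg_left (le_ciSup hbd1 x) hcpos.le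
    have e2 : (⨆ x, ‖fderiv ℝ (fun y => c * ψ y) x‖) ≤ c * S2 := by
      refine ciSup_le fun x => ?_
      have : fderiv ℝ (fun y => c * ψ y) x = c • fderiv ℝ ψ x := by
        simpa [smul_eq_mul] using fderiv_fun_const_smul (hd x) c
      rw [this, norm_smul, Real.norm_eq_abs, abs_of_pos hcpos]
      exact mul_le_mul_of_nonneg_left (le_ciSup hbd2 x) hcpos.le
    have e3 : (⨆ x, ‖iteratedFDeriv ℝ 2 (fun y => c * ψ y) x‖) ≤ c * S3 := by
      refine ciSup_le fun x => ?_
      have : iteratedFDeriv ℝ 2 (fun y => c * ψ y) x = c • iteratedFDeriv ℝ 2 ψ x := by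
        simpa [smul_eq_mul, Pi.smul_def] using iteratedFDeriv_const_smul_apply (i := 2) (a := c)
          (hψ2.of_le (le_refl 2)).contDiffAt (x := x)
      rw [this, norm_smul, Real.norm_eq_abs, abs_of_pos hcpos]
      exact mul_le_mul_of_nonneg_left (le_ciSup hbd3 x) hcpos.le
    have : c * S1 + c * S2 + c * S3 ≤ 1 := by
      rw [hc]
      rw [← mul_add, ← mul_add]
      rw [inv_mul_le_iff₀ hDpos]
      rw [hD]; nlinarith
    linarith [e1, e2, e3]
  · have : (∫ x in U, f x * (c * ψ x)) = c * ∫ x in U, f x * ψ x := by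
      rw [← integral_const_mul]
      congr 1; funext x; ring
    rw [this]
    exact mul_pos hcpos hpos


lemma Vmod_carrier (n d : ℕ) (f : En n → ℝ) : f ∈ Vmod n d ↔ IsPolyDegLt n d f :=
  Iff.rfl

theorem poly_weak_cauchy_unif
    (n : ℕ) (hn : 1 ≤ n) (d : ℕ) (U : Set (En n))
    (hUne : U.Nonempty) (hUopen : IsOpen U) (hUbdd : Bornology.IsBounded U)
    (P : ℕ → En n → ℝ) (hP : ∀ j, IsPolyDegLt n d (P j))
    (hcauchy : ∀ η > (0 : ℝ), ∃ N : ℕ, ∀ j ≥ N, ∀ j' ≥ N,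
      ∀ φ : En n → ℝ, ContDiff ℝ 2 φ → HasCompactSupport φ → tsupport φ ⊆ U →
        (⨆ x : En n, |φ x|) + (⨆ x : En n, ‖fderiv ℝ φ x‖) +
            (⨆ x : En n, ‖iteratedFDeriv ℝ 2 φ x‖) ≤ 1 →
        (∫ x in U, (P j x - P j' x) * φ x) ≤ η) :
    ∃ Q : En n → ℝ, IsPolyDegLt n d Q ∧
      TendstoUniformlyOn (fun j => P j) Q atTop U := by
  classical
  haveI : FiniteDimensional ℝ (Vmod n d) := Vmod_fd n d
  set V := Vmod n d with hVdef
  have hcont : ∀ f : V, Continuous (f : En n → ℝ) :=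
    fun f => poly_cont ((Vmod_carrier n d _).mp f.2)
  let Φ := {φ : En n → ℝ // ContDiff ℝ 2 φ ∧ HasCompactSupport φ ∧ tsupport φ ⊆ U ∧
      (⨆ x, |φ x|) + (⨆ x, ‖fderiv ℝ φ x‖) + (⨆ x, ‖iteratedFDeriv ℝ 2 φ x‖) ≤ 1}
  have hint : ∀ (f : V) (φ : Φ), IntegrableOn (fun x => (f : En n → ℝ) x * φ.1 x) U :=
    fun f φ => integ_mul hUbdd (hcont f) φ.2.1.continuous
  let J : V →ₗ[ℝ] (Φ → ℝ) :=
    { toFun := fun f φ => ∫ x in U, (f : En n → ℝ) x * φ.1 x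
      map_add' := by
        intro f g
        funext φ
        show (∫ x in U, ((f + g : V) : En n → ℝ) x * φ.1 x)
          = (∫ x in U, (f : En n → ℝ) x * φ.1 x) + ∫ x in U, (g : En n → ℝ) x * φ.1 x
        rw [← integral_add (hint f φ) (hint g φ)]
        congr 1; funext x
        simp [add_mul]
      map_smul' := by
        intro c f
        funext φ
        show (∫ x in U, ((c • f : V) : En n → ℝ) x * φ.1 x)
          = c • ∫ x in U, (f : En n → ℝ) x * φ.1 x
        rw [smul_eq_mul, ← integral_const_mul]
        congr 1; funext x
        simp; ring }
  -- injectivity of J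
  have hinj : Function.Injective J := by
    refine (injective_iff_map_eq_zero J).mpr ?_
    intro f hf0
    have hana : AnalyticOnNhd ℝ (f : En n → ℝ) Set.univ := by
      obtain ⟨p, -, hpe⟩ := (Vmod_carrier n d _).mp f.2
      have h : (f : En n → ℝ) = fun x : En n => MvPolynomial.eval (fun i => x i) p :=
        funext hpe
      rw [h]; exact poly_analytic p
    have hEqU : EqOn (f : En n → ℝ) 0 U := by
      intro x0 hx0
      by_contra hne
      have hne' : (f : En n → ℝ) x0 ≠ 0 := by simpa using hne
      rcases hne'.lt_or_gt with hneg | hpos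
      · -- f x0 < 0 : use g = -f
        obtain ⟨φ, h1, h2, h3, h4, h5⟩ :=
          exists_test hUopen hUbdd (hcont f).neg hx0 (by simpa using hneg)
        have hJ : (∫ x in U, (f : En n → ℝ) x * φ x) = 0 := congrFun hf0 ⟨φ, h1, h2, h3, h4⟩
        have : (∫ x in U, -(f : En n → ℝ) x * φ x) = 0 := by
          simp only [neg_mul]
          rw [integral_neg, hJ, neg_zero]
        simp only [Pi.neg_apply] at h5
        linarith [h5, this]
      · obtain ⟨φ, h1, h2, h3, h4, h5⟩ := exists_test hUopen hUbdd (hcont f) hx0 hpos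
        have hJ : (∫ x in U, (f : En n → ℝ) x * φ x) = 0 := congrFun hf0 ⟨φ, h1, h2, h3, h4⟩
        linarith [h5]
    obtain ⟨z0, hz0⟩ := hUne
    have hev : (f : En n → ℝ) =ᶠ[nhds z0] 0 :=
      Filter.eventually_of_mem (hUopen.mem_nhds hz0) hEqU
    have hall : EqOn (f : En n → ℝ) 0 Set.univ :=
      hana.eqOn_zero_of_preconnected_of_eventuallyEq_zero isPreconnected_univ
        (Set.mem_univ z0) hev
    exact Subtype.ext (funext fun x => hall (Set.mem_univ x))
  -- the sequence in V and its image
  let Pv : ℕ → V := fun j => ⟨P j, (Vmod_carrier n d _).mpr (hP j)⟩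
  let a : ℕ → Φ → ℝ := fun j => J (Pv j)
  have hCau : ∀ φ : Φ, CauchySeq fun j => a j φ := by
    intro φ
    rw [Metric.cauchySeq_iff]
    intro ε hε
    obtain ⟨N, hN⟩ := hcauchy (ε / 2) (by positivity)
    refine ⟨N, fun j hj j' hj' => ?_⟩
    have key : ∀ k ≥ N, ∀ k' ≥ N, a k φ - a k' φ ≤ ε / 2 := by
      intro k hk k' hk'
      have hsub : a k φ - a k' φ = ∫ x in U, (P k x - P k' x) * φ.1 x := by
        show (∫ x in U, P k x * φ.1 x) - (∫ x in U, P k' x * φ.1 x) = _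
        rw [← integral_sub (hint (Pv k) φ) (hint (Pv k') φ)]
        congr 1; funext x; ring
      rw [hsub]
      exact hN k hk k' hk' φ.1 φ.2.1 φ.2.2.1 φ.2.2.2.1 φ.2.2.2.2
    rw [Real.dist_eq]
    have habs : |a j φ - a j' φ| ≤ ε / 2 := by
      rcases abs_cases (a j φ - a j' φ) with ⟨h, -⟩ | ⟨h, -⟩
      · rw [h]; exact key j hj j' hj'
      · rw [h]; linarith [key j' hj' j hj]
    linarith
  choose ℓ hℓ using fun φ => cauchySeq_tendsto_of_complete (hCau φ)
  have hTend : Tendsto a atTop (nhds ℓ) := tendsto_pi_nhds.mpr hℓ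
  haveI : FiniteDimensional ℝ (LinearMap.range J) := Module.Finite.range J
  have hmem : ℓ ∈ LinearMap.range J := by
    have hcl : IsClosed (LinearMap.range J : Set (Φ → ℝ)) :=
      Submodule.closed_of_finiteDimensional _
    exact hcl.mem_of_tendsto hTend (Eventually.of_forall fun j => ⟨Pv j, rfl⟩)
  obtain ⟨Qv, hQv⟩ := hmem
  refine ⟨(Qv : En n → ℝ), (Vmod_carrier n d _).mp Qv.2, ?_⟩
  -- uniform convergence via restriction to the compact closure
  set K := closure U with hK
  haveI : CompactSpace K := isCompact_iff_compactSpace.mp hUbdd.isCompact_closure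
  let T : V →ₗ[ℝ] C(K, ℝ) :=
    { toFun := fun f => ⟨fun y => (f : En n → ℝ) y.1, (hcont f).comp continuous_subtype_val⟩
      map_add' := by intro f g; ext y; simp
      map_smul' := by intro c f; ext y; simp }
  let e := LinearEquiv.ofInjective J hinj
  let G : LinearMap.range J →ₗ[ℝ] C(K, ℝ) := T ∘ₗ e.symm.toLinearMap
  have hGc : Continuous G := LinearMap.continuous_of_finiteDimensional G
  let w : ℕ → LinearMap.range J := fun j => ⟨a j, ⟨Pv j, rfl⟩⟩
  let winf : LinearMap.range J := ⟨ℓ, ⟨Qv, hQv⟩⟩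
  have hwt : Tendsto w atTop (nhds winf) := by
    rw [Topology.IsEmbedding.subtypeVal.tendsto_nhds_iff]
    exact hTend
  have hGt : Tendsto (fun j => G (w j)) atTop (nhds (G winf)) := (hGc.tendsto _).comp hwt
  have hGw : ∀ j, G (w j) = T (Pv j) := by
    intro j
    have h1 : e.symm (w j) = Pv j := by
      rw [LinearEquiv.symm_apply_eq]
      exact Subtype.ext (LinearEquiv.ofInjective_apply J (Pv j)).symm
    show T (e.symm (w j)) = T (Pv j)
    rw [h1]
  have hGwinf : G winf = T Qv := by
    have h1 : e.symm winf = Qv := by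
      rw [LinearEquiv.symm_apply_eq]
      refine Subtype.ext ?_
      rw [LinearEquiv.ofInjective_apply]
      exact hQv.symm
    show T (e.symm winf) = T Qv
    rw [h1]
  rw [hGwinf] at hGt
  simp only [hGw] at hGt
  have hTU := ContinuousMap.tendsto_iff_tendstoUniformly.mp hGt
  rw [Metric.tendstoUniformlyOn_iff]
  intro ε hε
  filter_upwards [Metric.tendstoUniformly_iff.mp hTU ε hε] with j hj x hx
  exact hj ⟨x, subset_closure hx⟩
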